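/- Let T > 0, r ∈ ℝ, γ > 0 with γ ≠ 1, λ ≥ 0, ρ ∈ (−1,1), and let μ, σ, m, ν : [0,T] × ℝ → ℝ be continuous with σ(t,x) > 0, and let u : [0,T] × ℝ → ℝ be continuous. Suppose φ̄ : [0,T] × ℝ → ℝ admits continuous partial derivatives ∂φ̄/∂t, φ̄_x, φ̄_{xx} and satisfies, for all (t,x), ∂φ̄/∂t + (1−γ)r + m(t,x)φ̄_x + (1/2)ν(t,x)²(φ̄_{xx} + φ̄_x²) + (1−γ)[(μ(t,x)−r)u(t,x) − (γ/2)σ(t,x)²u(t,x)² + ρσ(t,x)ν(t,x)u(t,x)φ̄_x] = 0, with φ̄(T,x) = 0. Define J(t,w,x) = (w^{1−γ} exp(φ̄(t,x) − λ(1−γ)(T−t)/2) − 1)/(1−γ) for w > 0. Then for all t ∈ [0,T), w > 0, x ∈ ℝ: ∂J/∂t + (r + (μ(t,x)−r)u(t,x)) w J_w + (1/2)σ(t,x)²(u(t,x)² + λ/(γσ(t,x)²)) w² J_{ww} + m(t,x) J_x + (1/2)ν(t,x)² J_{xx} + ρν(t,x)σ(t,x)u(t,x) w J_{wx} = 0,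 and J(T,w,x) = (w^{1−γ}−1)/(1−γ). -/

import Mathlib

open Real Set

/-- The Feynman–Kac (policy evaluation) operator applied to `J` for the Gaussian feedback
policy with mean `u(t,x)` and variance `λ/(γσ(t,x)²)`, with partial derivatives via `deriv`. -/
noncomputable def FKterm (J : ℝ → ℝ → ℝ → ℝ) (μ σ m ν u : ℝ → ℝ → ℝ)
    (r γ lam ρ : ℝ) (t w x : ℝ) : ℝ :=
  deriv (fun s => J s w x) t
    + (r + (μ t x - r) * u t x) * w * deriv (fun w' => J t w' x) w
    + (1/2) * (σ t x)^2 * ((u t x)^2 + lam / (γ * (σ t x)^2)) * w^2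
        * deriv (fun w' => deriv (fun w'' => J t w'' x) w') w
    + m t x * deriv (fun y => J t w y) x
    + (1/2) * (ν t x)^2 * deriv (fun y => deriv (fun y' => J t w y') y) x
    + ρ * ν t x * σ t x * u t x * w * deriv (fun y => deriv (fun w' => J t w' y) w) x

/-- Theorem 2(i) (PDE verification): the candidate value function
`J(t,w,x) = (w^{1−γ} exp(φ̄(t,x) − λ(1−γ)(T−t)/2) − 1)/(1−γ)` built from a classical
solution `φ̄` of the linear PDE (13) solves the policy evaluation PDE for the Gaussian
feedback policy with mean `u` and variance `λ/(γσ²)`, with CRRA terminal condition. -/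
theorem stmt2
    (T r γ lam ρ : ℝ) (hT : 0 < T) (hγ : 0 < γ) (hγ1 : γ ≠ 1) (hlam : 0 ≤ lam)
    (hρ : ρ ∈ Set.Ioo (-1 : ℝ) 1)
    (μ σ m ν u : ℝ → ℝ → ℝ)
    (hμc : ContinuousOn (fun p : ℝ × ℝ => μ p.1 p.2) (Set.Icc 0 T ×ˢ Set.univ))
    (hσc : ContinuousOn (fun p : ℝ × ℝ => σ p.1 p.2) (Set.Icc 0 T ×ˢ Set.univ))
    (hmc : ContinuousOn (fun p : ℝ × ℝ => m p.1 p.2) (Set.Icc 0 T ×ˢ Set.univ))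
    (hνc : ContinuousOn (fun p : ℝ × ℝ => ν p.1 p.2) (Set.Icc 0 T ×ˢ Set.univ))
    (huc : ContinuousOn (fun p : ℝ × ℝ => u p.1 p.2) (Set.Icc 0 T ×ˢ Set.univ))
    (hσpos : ∀ t x, 0 < σ t x)
    (φ φt φx φxx : ℝ → ℝ → ℝ)
    (hφt : ∀ t x, HasDerivAt (fun s => φ s x) (φt t x) t)
    (hφx : ∀ t x, HasDerivAt (fun y => φ t y) (φx t x) x)
    (hφxx : ∀ t x, HasDerivAt (fun y => φx t y) (φxx t x) x)
    (hφtc : Continuous (fun p : ℝ × ℝ => φt p.1 p.2))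
    (hφxc : Continuous (fun p : ℝ × ℝ => φx p.1 p.2))
    (hφxxc : Continuous (fun p : ℝ × ℝ => φxx p.1 p.2))
    (hPDE : ∀ t ∈ Set.Icc 0 T, ∀ x : ℝ,
      φt t x + (1 - γ) * r + m t x * φx t x
        + (1/2) * (ν t x)^2 * (φxx t x + (φx t x)^2)
        + (1 - γ) * ((μ t x - r) * u t x - (γ / 2) * (σ t x)^2 * (u t x)^2
            + ρ * σ t x * ν t x * u t x * φx t x) = 0)
    (hterm : ∀ x : ℝ, φ T x = 0)
    (J : ℝ → ℝ → ℝ → ℝ)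
    (hJ : ∀ t w x, J t w x =
      (w ^ (1 - γ) * Real.exp (φ t x - lam * (1 - γ) * (T - t) / 2) - 1) / (1 - γ)) :
    ∀ t ∈ Set.Ico 0 T, ∀ w : ℝ, 0 < w → ∀ x : ℝ,
      FKterm J μ σ m ν u r γ lam ρ t w x = 0 ∧
      J T w x = (w ^ (1 - γ) - 1) / (1 - γ) := by
  intro t ht w hw x
  have h1γ : (1 : ℝ) - γ ≠ 0 := sub_ne_zero_of_ne (Ne.symm hγ1)
  have hγ0 : γ ≠ 0 := ne_of_gt hγ
  have hw0 : w ≠ 0 := ne_of_gt hw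
  have hσ0 : σ t x ≠ 0 := ne_of_gt (hσpos t x)
  constructor
  · -- abbreviations
    set K : ℝ := Real.exp (φ t x - lam * (1 - γ) * (T - t) / 2) with hK
    -- derivative in t
    have hd1 : HasDerivAt (fun s => J s w x)
        (w ^ (1 - γ) * (K * (φt t x + lam * (1 - γ) / 2)) / (1 - γ)) t := by
      have hlin : HasDerivAt (fun s : ℝ => φ s x - lam * (1 - γ) * (T - s) / 2)
          (φt t x + lam * (1 - γ) / 2) t := by
        have h2 : HasDerivAt (fun s : ℝ => lam * (1 - γ) * (T - s) / 2)
            (lam * (1 - γ) * (0 - 1) / 2) t :=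
          (((hasDerivAt_const t T).sub (hasDerivAt_id t)).const_mul (lam * (1 - γ))).div_const 2
        have := (hφt t x).sub h2
        exact this.congr_deriv (by ring)
      have := (((hlin.exp).const_mul (w ^ (1 - γ))).sub_const 1).div_const (1 - γ)
      simp only [hJ]
      convert this using 1
    -- derivative in w (at any positive point, any x-point)
    have hdw : ∀ y : ℝ, ∀ w' : ℝ, 0 < w' → HasDerivAt (fun w'' => J t w'' y)
        (w' ^ (-γ) * Real.exp (φ t y - lam * (1 - γ) * (T - t) / 2)) w' := by
      intro y w' hw'
      have hr : HasDerivAt (fun w'' : ℝ => w'' ^ (1 - γ)) ((1 - γ) * w' ^ (1 - γ - 1)) w' :=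
        Real.hasDerivAt_rpow_const (Or.inl (ne_of_gt hw'))
      have := ((hr.mul_const (Real.exp (φ t y - lam * (1 - γ) * (T - t) / 2))).sub_const
          1).div_const (1 - γ)
      simp only [hJ]
      refine this.congr_deriv ?_
      rw [show (1 - γ - 1 : ℝ) = -γ by ring]
      field_simp
    have hd2 : deriv (fun w' => J t w' x) w = w ^ (-γ) * K := (hdw x w hw).deriv
    -- second derivative in w
    have hd3 : deriv (fun w' => deriv (fun w'' => J t w'' x) w') w
        = (-γ) * w ^ (-γ - 1) * K := by
      have heq : (fun w' => deriv (fun w'' => J t w'' x) w')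
          =ᶠ[nhds w] (fun w' => w' ^ (-γ) * K) := by
        filter_upwards [isOpen_Ioi.mem_nhds hw] with w' hw'
        exact ((hdw x w' hw').deriv)
      rw [heq.deriv_eq]
      have hr : HasDerivAt (fun w' : ℝ => w' ^ (-γ)) ((-γ) * w ^ (-γ - 1)) w :=
        Real.hasDerivAt_rpow_const (Or.inl hw0)
      exact (hr.mul_const K).deriv
    -- derivative in x (at any x-point)
    have hdx : ∀ y : ℝ, HasDerivAt (fun y' => J t w y')
        (w ^ (1 - γ) * (Real.exp (φ t y - lam * (1 - γ) * (T - t) / 2) * φx t y) / (1 - γ)) y := by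
      intro y
      have hlin : HasDerivAt (fun y' : ℝ => φ t y' - lam * (1 - γ) * (T - t) / 2)
          (φx t y) y := (hφx t y).sub_const _
      have := (((hlin.exp).const_mul (w ^ (1 - γ))).sub_const 1).div_const (1 - γ)
      simp only [hJ]
      exact this
    have hd4 : deriv (fun y => J t w y) x = w ^ (1 - γ) * (K * φx t x) / (1 - γ) :=
      (hdx x).deriv
    -- second derivative in x
    have hd5 : deriv (fun y => deriv (fun y' => J t w y') y) x
        = w ^ (1 - γ) * (K * φx t x * φx t x + K * φxx t x) / (1 - γ) := by
      have heq : (fun y => deriv (fun y' => J t w y') y)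
          = (fun y => w ^ (1 - γ) * (Real.exp (φ t y - lam * (1 - γ) * (T - t) / 2) * φx t y)
              / (1 - γ)) := funext fun y => (hdx y).deriv
      rw [heq]
      have hlin : HasDerivAt (fun y : ℝ => φ t y - lam * (1 - γ) * (T - t) / 2) (φx t x) x :=
        (hφx t x).sub_const _
      have hprod := (hlin.exp.mul (hφxx t x))
      have := (hprod.const_mul (w ^ (1 - γ))).div_const (1 - γ)
      convert this.deriv using 1
      rfl
    -- mixed derivative
    have hd6 : deriv (fun y => deriv (fun w' => J t w' y) w) x
        = w ^ (-γ) * (K * φx t x) := by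
      have heq : (fun y => deriv (fun w' => J t w' y) w)
          = (fun y => w ^ (-γ) * Real.exp (φ t y - lam * (1 - γ) * (T - t) / 2)) :=
        funext fun y => (hdw y w hw).deriv
      rw [heq]
      have hlin : HasDerivAt (fun y : ℝ => φ t y - lam * (1 - γ) * (T - t) / 2) (φx t x) x :=
        (hφx t x).sub_const _
      exact (hlin.exp.const_mul (w ^ (-γ))).deriv
    -- rpow identities
    have hBA : w ^ (-γ : ℝ) = w ^ (1 - γ : ℝ) / w := by
      rw [show (1 - γ : ℝ) = -γ + 1 by ring, Real.rpow_add_one hw0]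
      field_simp
    have hCA : w ^ (-γ - 1 : ℝ) = w ^ (1 - γ : ℝ) / w ^ 2 := by
      rw [show (1 - γ : ℝ) = (-γ - 1) + 1 + 1 by ring, Real.rpow_add_one hw0,
        Real.rpow_add_one hw0]
      field_simp
    have hP := hPDE t ⟨ht.1, le_of_lt ht.2⟩ x
    rw [FKterm, hd1.deriv, hd2, hd3, hd4, hd5, hd6, hBA, hCA]
    have key : w ^ (1 - γ : ℝ) * (K * (φt t x + lam * (1 - γ) / 2)) / (1 - γ)
        + (r + (μ t x - r) * u t x) * w * (w ^ (1 - γ : ℝ) / w * K)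
        + 1 / 2 * σ t x ^ 2 * (u t x ^ 2 + lam / (γ * σ t x ^ 2)) * w ^ 2
            * (-γ * (w ^ (1 - γ : ℝ) / w ^ 2) * K)
        + m t x * (w ^ (1 - γ : ℝ) * (K * φx t x) / (1 - γ))
        + 1 / 2 * ν t x ^ 2
            * (w ^ (1 - γ : ℝ) * (K * φx t x * φx t x + K * φxx t x) / (1 - γ))
        + ρ * ν t x * σ t x * u t x * w * (w ^ (1 - γ : ℝ) / w * (K * φx t x))
        = (w ^ (1 - γ : ℝ) * K / (1 - γ)) *
          (φt t x + (1 - γ) * r + m t x * φx t x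
            + 1 / 2 * ν t x ^ 2 * (φxx t x + φx t x ^ 2)
            + (1 - γ) * ((μ t x - r) * u t x - γ / 2 * σ t x ^ 2 * u t x ^ 2
                + ρ * σ t x * ν t x * u t x * φx t x)) := by
      field_simp
      ring
    rw [key, hP, mul_zero]
  · rw [hJ, hterm x, sub_self, mul_zero, zero_div, sub_zero, Real.exp_zero, mul_one]
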